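/- arXiv:0904.0436 — 2 statements merged into one kernel-verified Lean document; each statement's English description precedes it below -/
import Mathlib

section
/- Let K be a topological space equipped with a semigroup structure whose multiplication K × K → K is jointly continuous, let H be a topological group, and let θ : H → K and ψ : K → H be continuous multiplicative maps such that ψ(θ(s)) = s for all s ∈ H and such that θ(1) is a two-sided identity for K. Set K₀ = ψ⁻¹({1}), a closed subset of K with the subspace topology. Then: (i) the action map H × K₀ → K₀, (s,k) ↦ θ(s)·k·θ(s⁻¹), is jointly continuous; and (ii) the map φ : H × K₀ → K, φ(s,k) = k·θ(s), is a homeomorphism from H × K₀ (with the product topology) onto K, with continuous inverse k ↦ (ψ(k), k·θ(ψ(k)⁻¹)). -/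
/-- Topological version: `K` a topological semigroup with jointly continuous
multiplication, `H` a topological group, `θ, ψ` continuous multiplicative maps with
`ψ ∘ θ = id` and `θ 1` a two-sided identity.  With `K₀ = ψ⁻¹ {1}` (subspace topology):
(i) the action `(s,k) ↦ θ s * k * θ s⁻¹` is a jointly continuous map `H × K₀ → K₀`, and
(ii) `φ(s,k) = k * θ s` is a homeomorphism `H × K₀ ≃ₜ K` with inverse
`k ↦ (ψ k, k * θ (ψ k)⁻¹)`. -/
theorem statement2 {K H : Type*} [TopologicalSpace K] [Semigroup K] [ContinuousMul K]
    [TopologicalSpace H] [Group H] [IsTopologicalGroup H]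
    (θ : H → K) (ψ : K → H) (hθc : Continuous θ) (hψc : Continuous ψ)
    (hθ : ∀ s t : H, θ (s * t) = θ s * θ t)
    (hψ : ∀ k l : K, ψ (k * l) = ψ k * ψ l)
    (hψθ : ∀ s : H, ψ (θ s) = s)
    (hunit : ∀ k : K, θ 1 * k = k ∧ k * θ 1 = k) :
    (∃ act : H × {k : K // ψ k = 1} → {k : K // ψ k = 1},
      Continuous act ∧
      ∀ p : H × {k : K // ψ k = 1}, (act p : K) = θ p.1 * (p.2 : K) * θ p.1⁻¹) ∧
    (∃ e : (H × {k : K // ψ k = 1}) ≃ₜ K,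
      (∀ p : H × {k : K // ψ k = 1}, e p = (p.2 : K) * θ p.1) ∧
      (∀ k : K, (e.symm k).1 = ψ k ∧ ((e.symm k).2 : K) = k * θ (ψ k)⁻¹)) := by

  constructor
  · refine ⟨fun p => ⟨θ p.1 * (p.2 : K) * θ p.1⁻¹, ?_⟩, ?_, fun p => rfl⟩
    · rw [hψ, hψ, hψθ, hψθ, p.2.2]
      group
    · exact Continuous.subtype_mk
        (((hθc.comp continuous_fst).mul
          (continuous_subtype_val.comp continuous_snd)).mul
          (hθc.comp (continuous_inv.comp continuous_fst))) _
  · have hto : ∀ p : H × {k : K // ψ k = 1}, (p.2 : K) * θ p.1 ∈ {k : K | ψ k = 1 → False} ∨ True := fun _ => Or.inr trivial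
    refine ⟨⟨⟨fun p => (p.2 : K) * θ p.1,
        fun k => ⟨ψ k, ⟨k * θ (ψ k)⁻¹, by rw [hψ, hψθ]; group⟩⟩, ?_, ?_⟩, ?_, ?_⟩, fun p => rfl, fun k => ⟨rfl, rfl⟩⟩
    · rintro ⟨s, k, hk⟩
      have h1 : ψ ((k : K) * θ s) = s := by rw [hψ, hψθ, hk, one_mul]
      apply Prod.ext
      · exact h1
      · apply Subtype.ext
        show (k : K) * θ s * θ (ψ ((k : K) * θ s))⁻¹ = k
        rw [h1, mul_assoc, ← hθ, mul_inv_cancel, (hunit _).2]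
    · intro k
      show k * θ (ψ k)⁻¹ * θ (ψ k) = k
      rw [mul_assoc, ← hθ, inv_mul_cancel, (hunit _).2]
    · exact (continuous_subtype_val.comp continuous_snd).mul (hθc.comp continuous_fst)
    · refine Continuous.prodMk hψc (Continuous.subtype_mk ?_ _)
      exact continuous_id.mul (hθc.comp (continuous_inv.comp hψc))
end

section
/- Let X be a T1 topological space and let A ⊆ X be a compact subset. Suppose that for every function f : X → ℂ with the property that for each ε > 0 the set {x ∈ X : ε ≤ |f(x)|} is finite, the restriction of f to A is continuous (i.e. f is continuous on A for the subspace topology). Then A, with the subspace topology, is discrete; in particular, since A is compact, A is finite. -/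
open Topology Filter


/-- Let `X` be a T1 space and `A ⊆ X` compact.  If every function
`f : X → ℂ` such that `{x : ε ≤ |f x|}` is finite for each `ε > 0` (i.e. every element of
`c₀` of the discretisation of `X`) restricts to a continuous function on `A`, then `A` with
the subspace topology is discrete; in particular, being compact, `A` is finite. -/
theorem statement8 {X : Type*} [TopologicalSpace X] [T1Space X] {A : Set X}
    (hA : IsCompact A)
    (h : ∀ f : X → ℂ, (∀ ε : ℝ, 0 < ε → {x : X | ε ≤ ‖f x‖}.Finite) →
      ContinuousOn f A) :
    DiscreteTopology A ∧ A.Finite := by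
  have hd : DiscreteTopology A := by
    classical
    rw [discreteTopology_subtype_iff]
    intro x hx
    set f : X → ℂ := fun y => if y = x then 1 else 0 with hf
    have hfin : ∀ ε : ℝ, 0 < ε → {y : X | ε ≤ ‖f y‖}.Finite := by
      intro ε hε
      apply Set.Finite.subset (Set.finite_singleton x)
      intro y hy
      by_contra hyx
      simp only [hf, Set.mem_setOf_eq, if_neg (by simpa using hyx)] at hy
      simp at hy; linarith
    have hc := (h f hfin) x hx
    have hmem : {x} ∈ 𝓝[A] x := by
      have := hc (Metric.ball_mem_nhds (f x) (by norm_num : (0:ℝ) < 1/2))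
      refine Filter.mem_of_superset this ?_
      intro y hy
      simp only [Set.mem_preimage, Metric.mem_ball, hf] at hy
      by_contra hyx
      norm_num [hf, if_neg (show ¬ y = x by simpa using hyx)] at hy
    have hle : 𝓝[≠] x ⊓ 𝓟 A ≤ 𝓝[A] x ⊓ 𝓟 {x}ᶜ := by
      rw [nhdsWithin, nhdsWithin, inf_right_comm]
    refine eq_bot_iff.mpr (le_trans hle ?_)
    rw [le_bot_iff]
    refine Filter.empty_mem_iff_bot.mp ?_
    have h2 : {x}ᶜ ∈ 𝓝[A] x ⊓ 𝓟 {x}ᶜ := Filter.mem_inf_of_right (Filter.mem_principal_self _)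
    have h1 : {x} ∈ 𝓝[A] x ⊓ 𝓟 {x}ᶜ := Filter.mem_inf_of_left hmem
    have := Filter.inter_mem h1 h2
    simpa using this
  exact ⟨hd, hA.finite (isDiscrete_iff_discreteTopology.mpr hd)⟩
end
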